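/- Closed-form solution for quadratic complexity (Special Case 2): Let n ≥ 1 and for each i let h_i > 0, g_i > 0, α_i ∈ {−1, 1}, and ω_i, c_i ∈ ℝ. Define φ_i(τ) = h_i·(ω_i − c_i + α_i·τ)², let Δ ∈ ℝ, and let S = ∑_i g_i²/(2h_i) (note S > 0). Define λ = (Δ − ∑_i α_i·g_i·(c_i − ω_i)) / S and τ_i = (g_i/(2h_i))·λ + α_i·(c_i − ω_i). Then this (λ, τ) satisfies the system φ_i'(τ_i) = λ·g_i for all i and ∑_i g_i·τ_i = Δ. -/

import Mathlib

/-- Special Case 2 (quadratic complexity φ_i(τ) = h_i (ω_i - c_i + α_i τ)²):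
the given closed-form λ and τ satisfy the stationarity equations
φ_i'(τ_i) = λ g_i and the active budget constraint ∑ g_i τ_i = Δ. -/
theorem toco_quadratic_closed_form (n : ℕ) (hn : 1 ≤ n)
    (h g : Fin n → ℝ) (hh : ∀ i, 0 < h i) (hgp : ∀ i, 0 < g i)
    (α : Fin n → ℝ) (hα : ∀ i, α i = -1 ∨ α i = 1)
    (ω c : Fin n → ℝ) (Δ : ℝ)
    (S : ℝ) (hS : S = ∑ i, (g i) ^ 2 / (2 * h i))
    (lam : ℝ) (hlam : lam = (Δ - ∑ i, α i * g i * (c i - ω i)) / S)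
    (τ : Fin n → ℝ) (hτ : ∀ i, τ i = g i / (2 * h i) * lam + α i * (c i - ω i)) :
    (∀ i, deriv (fun t => h i * (ω i - c i + α i * t) ^ 2) (τ i) = lam * g i) ∧
      ∑ i, g i * τ i = Δ := by
  have hSpos : 0 < S := by
    rw [hS]
    have : Nonempty (Fin n) := ⟨⟨0, hn⟩⟩
    exact Finset.sum_pos (fun i _ => div_pos (pow_pos (hgp i) 2)
      (mul_pos two_pos (hh i))) Finset.univ_nonempty
  have hαsq : ∀ i, α i ^ 2 = 1 := by
    intro i; rcases hα i with h1 | h1 <;> rw [h1] <;> ring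
  constructor
  · intro i
    have hd : HasDerivAt (fun t => h i * (ω i - c i + α i * t) ^ 2)
        (h i * (2 * (ω i - c i + α i * τ i) * α i)) (τ i) := by
      have := ((((hasDerivAt_id (τ i)).const_mul (α i)).const_add
        (ω i - c i)).pow 2).const_mul (h i)
      simpa using this
    rw [hd.deriv, hτ i]
    have hhne : (h i : ℝ) ≠ 0 := (hh i).ne'
    have hα2 := hαsq i
    field_simp
    linear_combination (g i * lam + 2 * h i * α i * (c i - ω i)) * hα2
  · have : ∀ i, g i * τ i = (g i) ^ 2 / (2 * h i) * lam + α i * g i * (c i - ω i) := by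
      intro i
      rw [hτ i]
      have h2 : (2 * h i : ℝ) ≠ 0 := (mul_pos two_pos (hh i)).ne'
      field_simp
    have hSne : S ≠ 0 := hSpos.ne'
    rw [Finset.sum_congr rfl (fun i _ => this i), Finset.sum_add_distrib,
      ← Finset.sum_mul, ← hS, hlam]
    field_simp
    ring
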